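/- Let S be a semiring and μ : Σ_r^* → S^{n×n} a monoid morphism. Define β : {b,c}^* → S^{rn×rn} on generators by β(b) = the block permutation matrix [0_{(r-1)n×n}, I_{(r-1)n}; I_n, 0_{n×(r-1)n}] and β(c) = diag(μ(a_1),...,μ(a_r)). Then for any word v = c^{i_1} b c^{i_2} b ··· c^{i_k} b c^{i_{k+1}} (with k ≥ 0, i_j ≥ 0), one has β(v) = diag(μ(a_1^{i_1} a_2^{i_2} ··· a_{k+1}^{i_{k+1}}), ..., μ(a_r^{i_1} a_{r+1}^{i_2} ··· a_{r+k}^{i_{k+1}})) · β(b)^k, where indices of letters are taken cyclically modulo r. -/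

import Mathlib

open Matrix

/-- The block cyclic shift matrix `[0, I_{(r-1)n}; I_n, 0]`: block `(i, j)` is
the identity iff `j ≡ i+1 (mod r)`. -/
def cycShift (S : Type*) [Semiring S] (r n : ℕ) :
    Matrix (Fin r × Fin n) (Fin r × Fin n) S :=
  Matrix.of fun p q => if (q.1 : ℕ) = ((p.1 : ℕ) + 1) % r ∧ p.2 = q.2 then 1 else 0

/-- The block diagonal matrix `diag(U_1, …, U_r)`. -/
def diagBlk {S : Type*} [Semiring S] {r n : ℕ}
    (U : Fin r → Matrix (Fin n) (Fin n) S) :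
    Matrix (Fin r × Fin n) (Fin r × Fin n) S :=
  Matrix.of fun p q => if p.1 = q.1 then U p.1 p.2 q.2 else 0

/-- The second embedding `β : {b,c}^* → S^{rn×rn}`, with `b = 0 ↦` the block
cyclic shift and `c = 1 ↦ diag(μ(a_1), …, μ(a_r))`. -/
def secondEmb {S : Type*} [Semiring S] {r n : ℕ}
    (μ : FreeMonoid (Fin r) →* Matrix (Fin n) (Fin n) S) :
    FreeMonoid (Fin 2) →* Matrix (Fin r × Fin n) (Fin r × Fin n) S :=
  FreeMonoid.lift fun x =>
    if x = 0 then cycShift S r n else diagBlk fun i => μ (FreeMonoid.of i)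

/-- The word `c^{i_1} b c^{i_2} b ⋯ c^{i_k} b c^{i_{k+1}}` over `{b, c}`,
encoded by the list `L = [i_1, …, i_k]` and the last exponent `e = i_{k+1}`. -/
def expWord (L : List ℕ) (e : ℕ) : FreeMonoid (Fin 2) :=
  (L.map fun i => (FreeMonoid.of (1 : Fin 2)) ^ i * FreeMonoid.of (0 : Fin 2)).prod
    * (FreeMonoid.of (1 : Fin 2)) ^ e

/-- The word `a_m^{i_1} a_{m+1}^{i_2} ⋯ a_{m+k}^{i_{k+1}}` over `Σ_r`, with
letters indexed cyclically modulo `r` (`0`-indexed). -/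
def cycWord {r : ℕ} [NeZero r] (L : List ℕ) (e : ℕ) (m : Fin r) :
    FreeMonoid (Fin r) :=
  (((L ++ [e]).zipIdx.map Prod.swap).map fun te =>
    (FreeMonoid.of (m + (Fin.ofNat r te.1 : Fin r))) ^ te.2).prod

section Aux

variable {S : Type*} [Semiring S] {r n : ℕ}

lemma diagBlk_mul (U V : Fin r → Matrix (Fin n) (Fin n) S) :
    diagBlk U * diagBlk V = diagBlk fun i => U i * V i := by
  ext ⟨i, x⟩ ⟨j, y⟩
  simp only [diagBlk, Matrix.mul_apply, Matrix.of_apply, Fintype.sum_prod_type]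
  rcases eq_or_ne i j with h | h
  · subst h
    simp [Finset.sum_ite_eq, Matrix.mul_apply]
  · simp only [if_neg h]
    refine Finset.sum_eq_zero fun k _ => Finset.sum_eq_zero fun z _ => ?_
    rcases eq_or_ne i k with h' | h'
    · subst h'; simp [if_neg h]
    · simp [if_neg h']

lemma diagBlk_one : (diagBlk fun _ : Fin r => (1 : Matrix (Fin n) (Fin n) S)) = 1 := by
  ext ⟨i, x⟩ ⟨j, y⟩
  simp only [diagBlk, Matrix.of_apply, Matrix.one_apply, Prod.mk.injEq, Prod.ext_iff]
  by_cases h : i = j <;> by_cases h' : x = y <;> simp [h, h', Matrix.one_apply]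

lemma diagBlk_pow (U : Fin r → Matrix (Fin n) (Fin n) S) (k : ℕ) :
    (diagBlk U) ^ k = diagBlk fun i => U i ^ k := by
  induction k with
  | zero => simp [diagBlk_one]
  | succ k ih => simp only [pow_succ, ih, diagBlk_mul]

/-- The underlying permutation of the cyclic shift. -/
def cycPerm (r n : ℕ) [NeZero r] : Fin r × Fin n ≃ Fin r × Fin n :=
  (Equiv.addRight (1 : Fin r)).prodCongr (Equiv.refl (Fin n))

lemma cycShift_eq_perm [NeZero r] :
    cycShift S r n = (cycPerm r n).toPEquiv.toMatrix := by
  ext ⟨i, x⟩ ⟨j, y⟩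
  simp only [cycShift, Matrix.of_apply, PEquiv.toMatrix_apply, Equiv.toPEquiv_apply,
    Option.mem_some_iff, cycPerm, Equiv.prodCongr_apply, Prod.map_apply,
    Equiv.coe_addRight, Equiv.refl_apply, Prod.mk.injEq, Prod.ext_iff]
  have hmod : ((i : ℕ) + 1) % r = ((i + 1 : Fin r) : ℕ) := by
    simp [Fin.add_def, Fin.val_one', Nat.add_mod]
  by_cases h : j = i + 1 <;> by_cases h' : x = y <;>
    simp [hmod, Fin.val_eq_val, h, h', eq_comm]

lemma cycShift_mul_diagBlk [NeZero r] (U : Fin r → Matrix (Fin n) (Fin n) S) :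
    cycShift S r n * diagBlk U = diagBlk (fun i => U (i + 1)) * cycShift S r n := by
  rw [cycShift_eq_perm, PEquiv.toMatrix_toPEquiv_mul, PEquiv.mul_toMatrix_toPEquiv]
  ext ⟨i, x⟩ ⟨j, y⟩
  simp only [Matrix.submatrix_apply, id_eq, diagBlk, Matrix.of_apply, cycPerm,
    Equiv.prodCongr_apply, Equiv.prodCongr_symm, Equiv.refl_symm, Prod.map_apply,
    Equiv.coe_addRight, Equiv.refl_apply, Equiv.symm_apply_eq]
  have : i + 1 = j ↔ i = (Equiv.addRight (1 : Fin r)).symm j := by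
    rw [Equiv.eq_symm_apply, Equiv.coe_addRight]
  by_cases h : i + 1 = j
  · rw [if_pos h, if_pos (this.mp h)]
  · rw [if_neg h, if_neg (fun h' => h (this.mpr h'))]

lemma secondEmb_b {μ : FreeMonoid (Fin r) →* Matrix (Fin n) (Fin n) S} :
    secondEmb μ (FreeMonoid.of (0 : Fin 2)) = cycShift S r n := by
  simp [secondEmb]

lemma secondEmb_c {μ : FreeMonoid (Fin r) →* Matrix (Fin n) (Fin n) S} :
    secondEmb μ (FreeMonoid.of (1 : Fin 2)) = diagBlk fun i => μ (FreeMonoid.of i) := by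
  simp [secondEmb]

lemma cycWord_nil {r : ℕ} [NeZero r] (e : ℕ) (m : Fin r) :
    cycWord [] e m = (FreeMonoid.of m) ^ e := by
  simp [cycWord]

lemma cycWord_cons {r : ℕ} [NeZero r] (i : ℕ) (L : List ℕ) (e : ℕ) (m : Fin r) :
    cycWord (i :: L) e m = (FreeMonoid.of m) ^ i * cycWord L e (m + 1) := by
  simp only [cycWord, List.cons_append, List.zipIdx_cons,
    List.zipIdx_succ (i := 0), List.map_cons, List.prod_cons, List.map_map]
  congr 1
  · simp
  · congr 1
    refine List.map_congr_left fun te _ => ?_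
    obtain ⟨t, k⟩ := te
    simp only [Function.comp_apply, Prod.swap_prod_mk]
    congr 2
    rw [add_assoc]
    congr 1
    apply Fin.ext
    simp [Fin.val_add, Fin.val_ofNat, Fin.val_one', Nat.add_mod, Nat.add_comm]

end Aux

/-- Lemma 3.1 (second embedding): for
`v = c^{i_1} b ⋯ c^{i_k} b c^{i_{k+1}}`,
`β(v) = diag(μ(a_1^{i_1}⋯a_{k+1}^{i_{k+1}}), …, μ(a_r^{i_1}⋯a_{r+k}^{i_{k+1}})) ⬝ β(b)^k`,
with cyclic indexing of the letters. -/
theorem secondEmb_formula {S : Type*} [Semiring S] {r n : ℕ} [NeZero r]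
    (μ : FreeMonoid (Fin r) →* Matrix (Fin n) (Fin n) S)
    (L : List ℕ) (e : ℕ) :
    secondEmb μ (expWord L e)
      = diagBlk (fun m => μ (cycWord L e m)) * (cycShift S r n) ^ L.length := by
  induction L with
  | nil =>
    have h : (fun m : Fin r => μ (cycWord [] e m)) = fun m => μ (FreeMonoid.of m) ^ e := by
      funext m
      rw [cycWord_nil, map_pow]
    simp only [expWord, List.map_nil, List.prod_nil, one_mul, map_pow, secondEmb_c,
      List.length_nil, pow_zero, mul_one, diagBlk_pow, h]
  | cons i L ih =>
    have hw : expWord (i :: L) e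
        = (FreeMonoid.of (1 : Fin 2)) ^ i * FreeMonoid.of (0 : Fin 2) * expWord L e := by
      simp [expWord, mul_assoc]
    have hc : (fun m : Fin r => μ (cycWord (i :: L) e m))
        = fun m => μ (FreeMonoid.of m) ^ i * μ (cycWord L e (m + 1)) := by
      funext m
      rw [cycWord_cons, _root_.map_mul, map_pow]
    rw [hw, _root_.map_mul, _root_.map_mul, map_pow, secondEmb_b, secondEmb_c, ih,
      List.length_cons]
    rw [diagBlk_pow, hc, ← diagBlk_mul, mul_assoc, ← mul_assoc (cycShift S r n),
      cycShift_mul_diagBlk]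
    simp only [mul_assoc, pow_succ']
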